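/- For θ ≤ θ* in (0,1), the randomized UMP p-value P_T^{rand} in the binomial model with n trials satisfies Prob_θ(P_T^{rand} ≤ t·τ) ≤ t·Prob_θ(P_T^{rand} ≤ τ) for all t ∈ [0,1] and τ ∈ (0,1]; i.e., P_T^{rand} is uniformly valid on the null hypothesis H: θ ≤ θ*. -/

import Mathlib

open MeasureTheory Set ProbabilityTheory

/-- The binomial pmf with `n` trials and success probability `θ`. -/
def binPMF (n : ℕ) (θ : ℝ) (k : ℕ) : ℝ := (n.choose k : ℝ) * θ ^ k * (1 - θ) ^ (n - k)

/-- The binomial CDF with `n` trials and success probability `θ`. -/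
def binCDF (n : ℕ) (θ : ℝ) (k : ℕ) : ℝ := ∑ j ∈ Finset.range (k + 1), binPMF n θ j

namespace Stmt13Aux

lemma binPMF_nonneg {n : ℕ} {θ : ℝ} (h0 : 0 ≤ θ) (h1 : θ ≤ 1) (k : ℕ) :
    0 ≤ binPMF n θ k := by
  have h2 : (0:ℝ) ≤ 1 - θ := by linarith
  unfold binPMF; positivity

lemma binPMF_pos {n : ℕ} {θ : ℝ} (h : θ ∈ Set.Ioo (0:ℝ) 1) {k : ℕ} (hk : k ≤ n) :
    0 < binPMF n θ k := by
  have h1 : (0:ℝ) < θ := h.1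
  have h2 : (0:ℝ) < 1 - θ := by linarith [h.2]
  have h3 : 0 < (n.choose k : ℝ) := by exact_mod_cast Nat.choose_pos hk
  unfold binPMF; positivity

lemma binPMF_zero {n k : ℕ} (θ : ℝ) (hk : n < k) : binPMF n θ k = 0 := by
  unfold binPMF; rw [Nat.choose_eq_zero_of_lt hk]; push_cast; ring

lemma sum_binPMF (n : ℕ) (θ : ℝ) : ∑ j ∈ Finset.range (n+1), binPMF n θ j = 1 := by
  have h := add_pow θ (1 - θ) n
  have h2 : θ + (1 - θ) = 1 := by ring
  rw [h2, one_pow] at h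
  calc ∑ j ∈ Finset.range (n+1), binPMF n θ j
      = ∑ j ∈ Finset.range (n+1), θ ^ j * (1 - θ) ^ (n - j) * (n.choose j : ℝ) :=
        Finset.sum_congr rfl (fun j _ => by unfold binPMF; ring)
    _ = 1 := h.symm

lemma binCDF_le_one {n k : ℕ} {θ : ℝ} (h0 : 0 ≤ θ) (h1 : θ ≤ 1) (hk : k ≤ n) :
    binCDF n θ k ≤ 1 := by
  unfold binCDF
  rw [← sum_binPMF n θ]
  exact Finset.sum_le_sum_of_subset_of_nonneg
    (Finset.range_subset_range.mpr (by omega)) (fun i _ _ => binPMF_nonneg h0 h1 i)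

/-- The likelihood ratio `f_θ(k)/f_{θ*}(k)` in product form. -/
noncomputable def ratio (n : ℕ) (θ θstar : ℝ) (k : ℕ) : ℝ :=
  (θ / θstar) ^ k * ((1 - θ) / (1 - θstar)) ^ (n - k)

/-- Left endpoint `1 - F_{θ*}(k)`. -/
noncomputable def lo (n : ℕ) (θstar : ℝ) (k : ℕ) : ℝ := 1 - binCDF n θstar k

/-- Right endpoint `1 - F_{θ*}(k) + f_{θ*}(k) = 1 - F_{θ*}(k-1)`. -/
noncomputable def up (n : ℕ) (θstar : ℝ) (k : ℕ) : ℝ :=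
  1 - binCDF n θstar k + binPMF n θstar k

/-- CDF of the randomized p-value at `c`, as an explicit finite sum. -/
noncomputable def Hfun (n : ℕ) (θ θstar c : ℝ) : ℝ :=
  ∑ k ∈ Finset.range (n+1),
    ratio n θ θstar k * (min c (up n θstar k) - min c (lo n θstar k))

lemma up_zero (n : ℕ) (θstar : ℝ) : up n θstar 0 = 1 := by
  unfold up binCDF
  rw [Finset.sum_range_one]; ring

lemma lo_eq_up_succ (n : ℕ) (θstar : ℝ) (k : ℕ) :
    lo n θstar k = up n θstar (k+1) := by
  have h : binCDF n θstar (k+1) = binCDF n θstar k + binPMF n θstar (k+1) :=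
    Finset.sum_range_succ (binPMF n θstar) (k+1)
  unfold lo up
  rw [h]; ring

lemma up_succ_n (n : ℕ) (θstar : ℝ) : up n θstar (n+1) = 0 := by
  unfold up binCDF
  rw [Finset.sum_range_succ]
  have h1 : ∑ j ∈ Finset.range (n+1), binPMF n θstar j = 1 := sum_binPMF n θstar
  rw [h1, binPMF_zero θstar (by omega)]; ring

lemma lo_nonneg {n k : ℕ} {θstar : ℝ} (h : θstar ∈ Set.Ioo (0:ℝ) 1) (hk : k ≤ n) :
    0 ≤ lo n θstar k := by
  have := binCDF_le_one (θ := θstar) h.1.le h.2.le hk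
  unfold lo; linarith

lemma up_nonneg {n k : ℕ} {θstar : ℝ} (h : θstar ∈ Set.Ioo (0:ℝ) 1) (hk : k ≤ n) :
    0 ≤ up n θstar k := by
  have h1 := lo_nonneg h hk
  have h2 := binPMF_nonneg (n := n) h.1.le h.2.le k
  unfold up at *; unfold lo at h1; linarith

lemma lo_le_up (n : ℕ) {θstar : ℝ} (h : θstar ∈ Set.Ioo (0:ℝ) 1) (k : ℕ) :
    lo n θstar k ≤ up n θstar k := by
  have h2 := binPMF_nonneg (n := n) h.1.le h.2.le k
  unfold lo up; linarith

lemma ratio_nonneg {n : ℕ} {θ θstar : ℝ} (hθ : θ ∈ Set.Ioo (0:ℝ) 1)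
    (hθstar : θstar ∈ Set.Ioo (0:ℝ) 1) (k : ℕ) : 0 ≤ ratio n θ θstar k := by
  have h1 : 0 ≤ θ / θstar := div_nonneg hθ.1.le hθstar.1.le
  have h2 : 0 ≤ (1 - θ) / (1 - θstar) :=
    div_nonneg (by linarith [hθ.2]) (by linarith [hθstar.2])
  unfold ratio; positivity

lemma binPMF_eq_ratio_mul {n : ℕ} {θ θstar : ℝ} (hθstar : θstar ∈ Set.Ioo (0:ℝ) 1) (k : ℕ) :
    binPMF n θ k = ratio n θ θstar k * binPMF n θstar k := by
  have h1 : θstar ≠ 0 := ne_of_gt hθstar.1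
  have h2 : (1 - θstar) ≠ 0 := by have := hθstar.2; intro h; linarith
  unfold binPMF ratio
  rw [div_pow, div_pow]
  field_simp

lemma ratio_antitone {n : ℕ} {θ θstar : ℝ} (hθ : θ ∈ Set.Ioo (0:ℝ) 1)
    (hθstar : θstar ∈ Set.Ioo (0:ℝ) 1) (hnull : θ ≤ θstar) {k : ℕ} (hk : k < n) :
    ratio n θ θstar (k+1) ≤ ratio n θ θstar k := by
  have hA : 0 ≤ θ / θstar := div_nonneg hθ.1.le hθstar.1.le
  have hB : 0 ≤ (1 - θ) / (1 - θstar) :=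
    div_nonneg (by linarith [hθ.2]) (by linarith [hθstar.2])
  have hAB : θ / θstar ≤ (1 - θ) / (1 - θstar) := by
    rw [div_le_div_iff₀ hθstar.1 (by linarith [hθstar.2])]
    nlinarith
  have hm : n - k = (n - (k+1)) + 1 := by omega
  unfold ratio
  rw [hm, pow_succ, pow_succ]
  set A := θ / θstar
  set B := (1 - θ) / (1 - θstar)
  have h1 : 0 ≤ A ^ k := pow_nonneg hA k
  have h2 : 0 ≤ B ^ (n - (k+1)) := pow_nonneg hB _
  nlinarith [mul_le_mul_of_nonneg_left hAB (mul_nonneg h1 h2)]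

lemma sign_lemma {a b x : ℝ} (ha : 0 ≤ a) (hab : a ≤ b) (hx : 0 ≤ x) :
    a * min b x - b * min a x ≤ 0 := by
  rcases le_total x a with h1 | h1
  · rw [min_eq_right (h1.trans hab), min_eq_right h1]; nlinarith
  · rcases le_total x b with h2 | h2
    · rw [min_eq_right h2, min_eq_left h1]; nlinarith
    · rw [min_eq_left h2, min_eq_left h1]; nlinarith

/-- Star-shapedness of `Hfun`: `b·H(a) ≤ a·H(b)` for `0 ≤ a ≤ b ≤ 1`. -/
lemma star (n : ℕ) {θ θstar a b : ℝ} (hθ : θ ∈ Set.Ioo (0:ℝ) 1)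
    (hθstar : θstar ∈ Set.Ioo (0:ℝ) 1) (hnull : θ ≤ θstar)
    (ha : 0 ≤ a) (hab : a ≤ b) (hb : b ≤ 1) :
    b * Hfun n θ θstar a ≤ a * Hfun n θ θstar b := by
  have hb0 : 0 ≤ b := ha.trans hab
  have ha1 : a ≤ 1 := hab.trans hb
  set r : ℕ → ℝ := fun k => ratio n θ θstar k with hr
  set e : ℕ → ℝ := fun k =>
    b * (min a (up n θstar k) - min a (lo n θstar k))
      - a * (min b (up n θstar k) - min b (lo n θstar k)) with he
  have key : b * Hfun n θ θstar a - a * Hfun n θ θstar b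
      = ∑ k ∈ Finset.range (n+1), r k * e k := by
    unfold Hfun
    rw [Finset.mul_sum, Finset.mul_sum, ← Finset.sum_sub_distrib]
    exact Finset.sum_congr rfl fun k _ => by simp only [he, hr]; ring
  -- partial sums of e
  have hE : ∀ m, ∑ k ∈ Finset.range m, e k
      = a * min b (up n θstar m) - b * min a (up n θstar m) := by
    intro m
    have h1 : ∀ k, e k =
        (b * min a (up n θstar k) - a * min b (up n θstar k))
          - (b * min a (up n θstar (k+1)) - a * min b (up n θstar (k+1))) := by
      intro k
      simp only [he, lo_eq_up_succ n θstar k]; ring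
    rw [Finset.sum_congr rfl (fun k _ => h1 k),
      Finset.sum_range_sub' (fun k => b * min a (up n θstar k) - a * min b (up n θstar k)) m]
    rw [up_zero, min_eq_left ha1, min_eq_left hb]
    ring
  have habel := Finset.sum_range_by_parts r e (n+1)
  simp only [smul_eq_mul, Nat.add_sub_cancel] at habel
  rw [habel] at key
  have hEtop : ∑ i ∈ Finset.range (n+1), e i = 0 := by
    rw [hE, up_succ_n]
    rw [min_eq_right hb0, min_eq_right ha]
    ring
  rw [hEtop, mul_zero, zero_sub] at key
  have hsum_nonneg : 0 ≤ ∑ i ∈ Finset.range n, (r (i+1) - r i) * ∑ k ∈ Finset.range (i+1), e k := by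
    apply Finset.sum_nonneg
    intro i hi
    have hi' : i < n := Finset.mem_range.mp hi
    have h1 : r (i+1) - r i ≤ 0 :=
      sub_nonpos.mpr (ratio_antitone hθ hθstar hnull hi')
    have h2 : ∑ k ∈ Finset.range (i+1), e k ≤ 0 := by
      rw [hE]
      exact sign_lemma ha hab (up_nonneg hθstar (by omega))
    nlinarith [mul_nonneg (neg_nonneg.mpr h1) (neg_nonneg.mpr h2)]
  linarith [key, hsum_nonneg]

lemma Hfun_term_nonneg {n : ℕ} {θ θstar c : ℝ} (hθ : θ ∈ Set.Ioo (0:ℝ) 1)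
    (hθstar : θstar ∈ Set.Ioo (0:ℝ) 1) (k : ℕ) :
    0 ≤ ratio n θ θstar k * (min c (up n θstar k) - min c (lo n θstar k)) := by
  apply mul_nonneg (ratio_nonneg hθ hθstar k)
  have := lo_le_up n hθstar k
  exact sub_nonneg.mpr (min_le_min le_rfl this)

lemma clamp_eq {f lo c : ℝ} (hf : 0 < f) (hc : 0 ≤ c) :
    f * min (max ((c - lo) / f) 0) 1 = min c (lo + f) - min c lo := by
  rcases le_total c lo with h | h
  · have h1 : (c - lo) / f ≤ 0 := div_nonpos_iff.mpr (Or.inr ⟨by linarith, hf.le⟩)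
    rw [max_eq_right h1, min_eq_left (by norm_num : (0:ℝ) ≤ 1),
      min_eq_left (by linarith : c ≤ lo + f), min_eq_left h]
    ring
  · rcases le_total c (lo + f) with h2 | h2
    · have h3 : (c - lo) / f ≤ 1 := (div_le_one hf).mpr (by linarith)
      have h4 : 0 ≤ (c - lo) / f := div_nonneg (by linarith) hf.le
      rw [max_eq_left h4, min_eq_left h3, mul_comm, div_mul_cancel₀ _ hf.ne',
        min_eq_left h2, min_eq_right h]
    · have h3 : 1 ≤ (c - lo) / f := (one_le_div hf).mpr (by linarith)
      rw [max_eq_left (le_trans zero_le_one h3), min_eq_right h3,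
        min_eq_right h2, min_eq_right h]
      ring

end Stmt13Aux

open Stmt13Aux in
/-- Uniform validity of the randomized UMP p-value
`P_T^{rand} = 1 - F_{θ*}(T) + U·f_{θ*}(T)` in the binomial model on the null `θ ≤ θ*`:
`Prob_θ(P_T^{rand} ≤ t·τ) ≤ t·Prob_θ(P_T^{rand} ≤ τ)` for all `t ∈ [0,1]`, `τ ∈ (0,1]`. -/
theorem stmt_13 {Ω : Type*} [MeasurableSpace Ω] (μ : Measure Ω) [IsProbabilityMeasure μ]
    (n : ℕ) (θ θstar : ℝ) (hθ : θ ∈ Ioo (0:ℝ) 1) (hθstar : θstar ∈ Ioo (0:ℝ) 1)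
    (hnull : θ ≤ θstar)
    (T : Ω → ℕ) (hTmeas : Measurable T)
    (hTlaw : ∀ k : ℕ, μ {ω | T ω = k} = ENNReal.ofReal (binPMF n θ k))
    (U : Ω → ℝ) (hUmeas : Measurable U)
    (hUunif : μ.map U = volume.restrict (Icc (0:ℝ) 1))
    (hindep : IndepFun T U μ)
    (P : Ω → ℝ)
    (hP : ∀ ω, P ω = 1 - binCDF n θstar (T ω) + U ω * binPMF n θstar (T ω)) :
    ∀ t ∈ Icc (0:ℝ) 1, ∀ τ ∈ Ioc (0:ℝ) 1,
      μ {ω | P ω ≤ t * τ} ≤ ENNReal.ofReal t * μ {ω | P ω ≤ τ} := by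
  -- probability of U landing below x
  have hU : ∀ x : ℝ, μ (U ⁻¹' Iic x) = ENNReal.ofReal (min (max x 0) 1) := by
    intro x
    rw [← Measure.map_apply hUmeas measurableSet_Iic, hUunif,
      Measure.restrict_apply measurableSet_Iic]
    rcases le_or_gt 0 x with hx | hx
    · have hset : Iic x ∩ Icc (0:ℝ) 1 = Icc 0 (min x 1) := by
        ext y
        simp only [mem_inter_iff, mem_Iic, mem_Icc, le_min_iff]
        constructor
        · rintro ⟨h1, h2, h3⟩; exact ⟨h2, h1, h3⟩
        · rintro ⟨h1, h2, h3⟩; exact ⟨h2, h1, h3⟩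
      rw [hset, Real.volume_Icc, max_eq_left hx, sub_zero]
    · have hset : Iic x ∩ Icc (0:ℝ) 1 = ∅ := by
        ext y
        simp only [mem_inter_iff, mem_Iic, mem_Icc, mem_empty_iff_false, iff_false, not_and]
        intro h1 h2; linarith
      rw [hset, measure_empty, max_eq_right hx.le,
        min_eq_left (by norm_num : (0:ℝ) ≤ 1), ENNReal.ofReal_zero]
  -- main measure computation
  have hmeas : ∀ c : ℝ, 0 ≤ c →
      μ {ω | P ω ≤ c} = ENNReal.ofReal (Hfun n θ θstar c) := by
    intro c hc
    set B : ℕ → Set Ω := fun k =>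
      (T ⁻¹' {k}) ∩ (U ⁻¹' {x | 1 - binCDF n θstar k + x * binPMF n θstar k ≤ c}) with hB
    have hBset : ∀ k, MeasurableSet {x : ℝ | 1 - binCDF n θstar k + x * binPMF n θstar k ≤ c} := by
      intro k
      exact measurableSet_le (measurable_const.add (measurable_id.mul_const _)) measurable_const
    have hset : {ω | P ω ≤ c} = ⋃ k, B k := by
      ext ω
      simp only [hB, mem_setOf_eq, mem_iUnion, mem_inter_iff, mem_preimage, mem_singleton_iff]
      constructor
      · intro h
        exact ⟨T ω, rfl, by rw [hP ω] at h; exact h⟩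
      · rintro ⟨k, hk, h⟩
        rw [hP ω, hk]; exact h
    have hBmeas : ∀ k, MeasurableSet (B k) :=
      fun k => (hTmeas (measurableSet_singleton k)).inter (hUmeas (hBset k))
    have hdisj : Pairwise (Function.onFun Disjoint B) := by
      intro i j hij
      simp only [Function.onFun, hB]
      rw [Set.disjoint_left]
      rintro ω ⟨h1, _⟩ ⟨h2, _⟩
      rw [mem_preimage, mem_singleton_iff] at h1 h2
      exact hij (h1.symm.trans h2)
    have hTsing : ∀ k : ℕ, μ (T ⁻¹' {k}) = ENNReal.ofReal (binPMF n θ k) := by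
      intro k
      rw [show T ⁻¹' {k} = {ω | T ω = k} by ext ω; simp]
      exact hTlaw k
    have htail : ∀ k ∉ Finset.range (n+1), μ (B k) = 0 := by
      intro k hk
      have hk' : n < k := by simp only [Finset.mem_range] at hk; omega
      apply measure_mono_null inter_subset_left
      rw [hTsing k, binPMF_zero θ hk', ENNReal.ofReal_zero]
    have hterm : ∀ k ∈ Finset.range (n+1), μ (B k)
        = ENNReal.ofReal (ratio n θ θstar k *
            (min c (up n θstar k) - min c (lo n θstar k))) := by
      intro k hk
      have hkn : k ≤ n := by
        have := Finset.mem_range.mp hk; omega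
      have hf : 0 < binPMF n θstar k := binPMF_pos hθstar hkn
      have hxset : {x : ℝ | 1 - binCDF n θstar k + x * binPMF n θstar k ≤ c}
          = Iic ((c - (1 - binCDF n θstar k)) / binPMF n θstar k) := by
        ext x
        simp only [mem_setOf_eq, mem_Iic]
        rw [le_div_iff₀ hf]
        constructor <;> intro h <;> linarith
      simp only [hB, hxset]
      rw [hindep.measure_inter_preimage_eq_mul {k} _ (measurableSet_singleton k)
        measurableSet_Iic, hTsing k, hU]
      rw [← ENNReal.ofReal_mul (binPMF_nonneg hθ.1.le hθ.2.le k)]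
      congr 1
      rw [binPMF_eq_ratio_mul hθstar k, mul_assoc]
      congr 1
      have hid := clamp_eq (f := binPMF n θstar k) (lo := 1 - binCDF n θstar k) hf hc
      simp only [up, lo]
      linarith [hid]
    rw [hset, measure_iUnion hdisj hBmeas, tsum_eq_sum htail,
      Finset.sum_congr rfl hterm,
      ← ENNReal.ofReal_sum_of_nonneg (fun k _ => Hfun_term_nonneg hθ hθstar k)]
    rfl
  -- conclusion
  intro t ht τ hτ
  obtain ⟨ht0, ht1⟩ := ht
  obtain ⟨hτ0, hτ1⟩ := hτ
  have ha : 0 ≤ t * τ := mul_nonneg ht0 hτ0.le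
  have hab : t * τ ≤ τ := by nlinarith
  rw [hmeas (t * τ) ha, hmeas τ hτ0.le]
  have hstar := star n hθ hθstar hnull ha hab hτ1
  have h2 : (t * τ) * Hfun n θ θstar τ = τ * (t * Hfun n θ θstar τ) := by ring
  have hH : Hfun n θ θstar (t * τ) ≤ t * Hfun n θ θstar τ :=
    le_of_mul_le_mul_left (by linarith) hτ0
  calc ENNReal.ofReal (Hfun n θ θstar (t * τ))
      ≤ ENNReal.ofReal (t * Hfun n θ θstar τ) := ENNReal.ofReal_le_ofReal hH
    _ = ENNReal.ofReal t * ENNReal.ofReal (Hfun n θ θstar τ) := ENNReal.ofReal_mul ht0
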